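/- For any connected weight configuration (φ^tot(W) > 0) that is not a global maximizer (φ^tot(W) < 1), there exists a direction of weight perturbation that strictly increases φ^tot; equivalently, over the product of per-layer probability simplices, every local maximizer of φ^tot is a global maximizer with value 1 (assuming every layer contains at least one edge on some complete input-output path). -/

import Mathlib

open Finset

/-- Contiguity of an edge sequence: consecutive edges share endpoints. -/
def Contig (K : ℕ) (γ : Fin (K-1) → ℕ × ℕ) : Prop :=
  ∀ k : Fin (K-1), ∀ h : k.val + 1 < K - 1, (γ k).2 = (γ ⟨k.val + 1, h⟩).1

instance (K : ℕ) (γ : Fin (K-1) → ℕ × ℕ) : Decidable (Contig K γ) := by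
  unfold Contig; infer_instance

/-- Total connectivity: sum over all contiguous input-to-output edge sequences of
the product of edge weights. -/
noncomputable def phiTot (K : ℕ) (E : ℕ → Finset (ℕ × ℕ)) (θ : ℕ → ℕ → ℕ → ℝ) : ℝ :=
  ∑ γ ∈ (Fintype.piFinset (fun k : Fin (K-1) => E k.val)).filter (fun γ => Contig K γ),
    ∏ k : Fin (K-1), θ k.val (γ k).1 (γ k).2

/-- Total absolute weight of layer k. -/
noncomputable def Snorm (E : ℕ → Finset (ℕ × ℕ)) (W : ℕ → ℕ → ℕ → ℝ) (k : ℕ) : ℝ :=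
  ∑ e ∈ E k, |W k e.1 e.2|

/-- Per-layer normalized weights. -/
noncomputable def thetaNorm (E : ℕ → Finset (ℕ × ℕ)) (W : ℕ → ℕ → ℕ → ℝ)
    (k i j : ℕ) : ℝ :=
  |W k i j| / Snorm E W k

/-- Connectivity from the input layer to node `r` in layer `l`. -/
noncomputable def aIn (E : ℕ → Finset (ℕ × ℕ)) (θ : ℕ → ℕ → ℕ → ℝ) (l r : ℕ) : ℝ :=
  ∑ γ ∈ (Fintype.piFinset (fun k : Fin l => E k.val)).filter
      (fun γ => (∀ k : Fin l, ∀ h : k.val + 1 < l, (γ k).2 = (γ ⟨k.val + 1, h⟩).1)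
        ∧ ∀ h : 0 < l, (γ ⟨l - 1, by omega⟩).2 = r),
    ∏ k : Fin l, θ k.val (γ k).1 (γ k).2

/-- Connectivity from node `r` in layer `l` to the output layer (layer K-1). -/
noncomputable def aOut (K : ℕ) (E : ℕ → Finset (ℕ × ℕ)) (θ : ℕ → ℕ → ℕ → ℝ)
    (l r : ℕ) : ℝ :=
  ∑ γ ∈ (Fintype.piFinset (fun k : Fin (K - 1 - l) => E (l + k.val))).filter
      (fun γ => (∀ k : Fin (K - 1 - l), ∀ h : k.val + 1 < K - 1 - l,
          (γ k).2 = (γ ⟨k.val + 1, h⟩).1)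
        ∧ ∀ h : 0 < K - 1 - l, (γ ⟨0, h⟩).1 = r),
    ∏ k : Fin (K - 1 - l), θ (l + k.val) (γ k).1 (γ k).2


/-- Chain predicate on a sequence of edges. -/
def Chain (n : ℕ) (γ : Fin n → ℕ × ℕ) : Prop :=
  ∀ k : Fin n, ∀ h : k.val + 1 < n, (γ k).2 = (γ ⟨k.val + 1, h⟩).1

instance (n : ℕ) (γ : Fin n → ℕ × ℕ) : Decidable (Chain n γ) := by
  unfold Chain; infer_instance

def ChainFrom (n r : ℕ) (γ : Fin n → ℕ × ℕ) : Prop :=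
  Chain n γ ∧ ∀ _ : 0 < n, (γ ⟨0, ‹_›⟩).1 = r

instance (n r : ℕ) (γ : Fin n → ℕ × ℕ) : Decidable (ChainFrom n r γ) := by
  unfold ChainFrom; infer_instance

def ChainTo (n r : ℕ) (γ : Fin n → ℕ × ℕ) : Prop :=
  Chain n γ ∧ ∀ h : 0 < n, (γ ⟨n - 1, by omega⟩).2 = r

instance (n r : ℕ) (γ : Fin n → ℕ × ℕ) : Decidable (ChainTo n r γ) := by
  unfold ChainTo; infer_instance

noncomputable def pTot (F : ℕ → Finset (ℕ × ℕ)) (w : ℕ → ℕ × ℕ → ℝ) (n : ℕ) : ℝ :=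
  ∑ γ ∈ (Fintype.piFinset (fun k : Fin n => F k.val)).filter (fun γ => Chain n γ),
    ∏ k : Fin n, w k.val (γ k)

noncomputable def pOut (F : ℕ → Finset (ℕ × ℕ)) (w : ℕ → ℕ × ℕ → ℝ) (n r : ℕ) : ℝ :=
  ∑ γ ∈ (Fintype.piFinset (fun k : Fin n => F k.val)).filter (fun γ => ChainFrom n r γ),
    ∏ k : Fin n, w k.val (γ k)

noncomputable def pIn (F : ℕ → Finset (ℕ × ℕ)) (w : ℕ → ℕ × ℕ → ℝ) (n r : ℕ) : ℝ :=
  ∑ γ ∈ (Fintype.piFinset (fun k : Fin n => F k.val)).filter (fun γ => ChainTo n r γ),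
    ∏ k : Fin n, w k.val (γ k)

/-- layer shift -/
def shf {α : Type*} (l : ℕ) (f : ℕ → α) : ℕ → α := fun j => f (j + l)

lemma shf_shf {α : Type*} (a b : ℕ) (f : ℕ → α) : shf a (shf b f) = shf (a + b) f := by
  funext j; simp [shf, Nat.add_assoc]

/-- generic cons decomposition for sums over filtered piFinsets -/
lemma sum_filter_piFinset_cons {n : ℕ} (F : Fin (n+1) → Finset (ℕ × ℕ))
    (P : (Fin (n+1) → ℕ × ℕ) → Prop) [DecidablePred P]
    (w : Fin (n+1) → (ℕ × ℕ) → ℝ) :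
    ∑ γ ∈ (Fintype.piFinset F).filter P, ∏ i, w i (γ i)
      = ∑ e ∈ F 0, ∑ δ ∈ (Fintype.piFinset fun i : Fin n => F i.succ).filter
          (fun δ => P (Fin.cons e δ)), w 0 e * ∏ i : Fin n, w i.succ (δ i) := by
  rw [Finset.sum_sigma']
  refine Finset.sum_nbij' (i := fun γ => ⟨γ 0, Fin.tail γ⟩)
    (j := fun p => Fin.cons p.1 p.2) ?_ ?_ ?_ ?_ ?_
  · intro γ hγ
    simp only [Finset.mem_filter, Fintype.mem_piFinset] at hγ
    simp only [Finset.mem_sigma, Finset.mem_filter, Fintype.mem_piFinset]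
    refine ⟨hγ.1 0, fun i => hγ.1 i.succ, ?_⟩
    rw [Fin.cons_self_tail]; exact hγ.2
  · rintro ⟨e, δ⟩ hp
    simp only [Finset.mem_sigma, Finset.mem_filter, Fintype.mem_piFinset] at hp
    simp only [Finset.mem_filter, Fintype.mem_piFinset]
    refine ⟨fun i => ?_, hp.2.2⟩
    rcases Fin.eq_zero_or_eq_succ i with h | ⟨j, rfl⟩
    · subst h; simpa using hp.1
    · simpa using hp.2.1 j
  · intro γ _; exact Fin.cons_self_tail γ
  · rintro ⟨e, δ⟩ _; simp [Fin.tail_cons]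
  · intro γ _
    simp only []
    rw [Fin.prod_univ_succ]
    rfl

lemma sum_filter_piFinset_snoc {n : ℕ} (F : Fin (n+1) → Finset (ℕ × ℕ))
    (P : (Fin (n+1) → ℕ × ℕ) → Prop) [DecidablePred P]
    (w : Fin (n+1) → (ℕ × ℕ) → ℝ) :
    ∑ γ ∈ (Fintype.piFinset F).filter P, ∏ i, w i (γ i)
      = ∑ e ∈ F (Fin.last n), ∑ δ ∈ (Fintype.piFinset fun i : Fin n => F i.castSucc).filter
          (fun δ => P (Fin.snoc δ e)), (∏ i : Fin n, w i.castSucc (δ i)) * w (Fin.last n) e := by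
  rw [Finset.sum_sigma']
  refine Finset.sum_nbij' (i := fun γ => ⟨γ (Fin.last n), Fin.init γ⟩)
    (j := fun p => Fin.snoc p.2 p.1) ?_ ?_ ?_ ?_ ?_
  · intro γ hγ
    simp only [Finset.mem_filter, Fintype.mem_piFinset] at hγ
    simp only [Finset.mem_sigma, Finset.mem_filter, Fintype.mem_piFinset]
    refine ⟨hγ.1 _, fun i => hγ.1 i.castSucc, ?_⟩
    rw [Fin.snoc_init_self]; exact hγ.2
  · rintro ⟨e, δ⟩ hp
    simp only [Finset.mem_sigma, Finset.mem_filter, Fintype.mem_piFinset] at hp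
    simp only [Finset.mem_filter, Fintype.mem_piFinset]
    refine ⟨fun i => ?_, hp.2.2⟩
    rcases Fin.eq_castSucc_or_eq_last i with ⟨j, rfl⟩ | h
    · simpa using hp.2.1 j
    · subst h; simpa using hp.1
  · intro γ _; exact Fin.snoc_init_self γ
  · rintro ⟨e, δ⟩ _; simp [Fin.init_snoc, Fin.snoc_last]
  · intro γ _
    rw [Fin.prod_univ_castSucc]
    rfl

lemma chain_cons {n : ℕ} (e : ℕ × ℕ) (δ : Fin n → ℕ × ℕ) :
    Chain (n+1) (Fin.cons e δ) ↔ ChainFrom n e.2 δ := by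
  constructor
  · intro h
    refine ⟨fun k hk => ?_, fun hn => ?_⟩
    · exact h ⟨k.val + 1, Nat.lt_succ_of_lt hk⟩ (Nat.succ_lt_succ hk)
    · exact (h ⟨0, Nat.succ_pos n⟩ (Nat.succ_lt_succ hn)).symm
  · rintro ⟨hc, h0⟩ k hk
    rcases k with ⟨kv, hkv⟩
    cases kv with
    | zero => exact (h0 (Nat.lt_of_succ_lt_succ hk)).symm
    | succ m => exact hc ⟨m, Nat.lt_of_succ_lt_succ hkv⟩ (Nat.lt_of_succ_lt_succ hk)

lemma chainFrom_cons {n : ℕ} (r : ℕ) (e : ℕ × ℕ) (δ : Fin n → ℕ × ℕ) :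
    ChainFrom (n+1) r (Fin.cons e δ) ↔ e.1 = r ∧ ChainFrom n e.2 δ := by
  unfold ChainFrom
  rw [show (Chain (n+1) (Fin.cons e δ)) ↔ ChainFrom n e.2 δ from chain_cons e δ]
  constructor
  · rintro ⟨h1, h2⟩
    exact ⟨h2 (Nat.succ_pos n), h1⟩
  · rintro ⟨h1, h2⟩
    exact ⟨h2, fun _ => h1⟩

lemma chainTo_snoc {n : ℕ} (r : ℕ) (e : ℕ × ℕ) (δ : Fin n → ℕ × ℕ) :
    ChainTo (n+1) r (Fin.snoc δ e) ↔ e.2 = r ∧ ChainTo n e.1 δ := by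
  have hcs' : ∀ (k : Fin (n+1)) (hm : k.val < n),
      (Fin.snoc δ e : Fin (n+1) → ℕ × ℕ) k = δ ⟨k.val, hm⟩ := by
    rintro ⟨kv, h⟩ hm
    exact @Fin.snoc_castSucc n (fun _ => ℕ × ℕ) e δ ⟨kv, hm⟩
  have hlast' : ∀ (k : Fin (n+1)), k.val = n →
      (Fin.snoc δ e : Fin (n+1) → ℕ × ℕ) k = e := by
    rintro ⟨kv, h⟩ hkv
    have hkv' : kv = n := hkv
    subst hkv'
    exact @Fin.snoc_last kv (fun _ => ℕ × ℕ) e δ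
  have hδidx : ∀ (a b : ℕ) (ha : a < n) (hb : b < n), a = b → δ ⟨a, ha⟩ = δ ⟨b, hb⟩ := by
    rintro a b ha hb rfl; rfl
  constructor
  · rintro ⟨hch, hlst⟩
    have he2 : e.2 = r := by
      have h := hlst (Nat.succ_pos n)
      rwa [hlast' ⟨n+1-1, by omega⟩ rfl] at h
    refine ⟨he2, ⟨fun k hk => ?_, fun hn => ?_⟩⟩
    · have h := hch ⟨k.val, Nat.lt_succ_of_lt k.isLt⟩ (Nat.lt_succ_of_lt hk)
      rw [hcs' ⟨k.val, Nat.lt_succ_of_lt k.isLt⟩ (show k.val < n from k.isLt), hcs' ⟨k.val+1, Nat.lt_succ_of_lt hk⟩ (show k.val + 1 < n from hk)] at h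
      exact h
    · have h := hch ⟨n-1, show n-1 < n+1 by omega⟩ (show n-1+1 < n+1 by omega)
      rw [hcs' ⟨n-1, show n-1 < n+1 by omega⟩ (show n-1 < n by omega)] at h
      rw [hlast' ⟨n-1+1, show n-1+1 < n+1 by omega⟩ (show n-1+1 = n by omega)] at h
      exact h
  · rintro ⟨he2, hch, hlst⟩
    refine ⟨fun k hk => ?_, fun hn => ?_⟩
    · by_cases hk1 : k.val + 1 < n
      · rw [hcs' k (by omega), hcs' ⟨k.val+1, by omega⟩ (show k.val + 1 < n from hk1)]
        exact hch ⟨k.val, by omega⟩ hk1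
      · have hkn : k.val + 1 = n := by omega
        rw [hcs' k (by omega), hlast' ⟨k.val+1, by omega⟩ hkn]
        have h := hlst (by omega)
        rw [hδidx (n-1) k.val (by omega) (by omega) (by omega)] at h
        exact h
    · rw [hlast' ⟨n+1-1, by omega⟩ rfl]
      exact he2

lemma pIn_zero (F : ℕ → Finset (ℕ × ℕ)) (w : ℕ → ℕ × ℕ → ℝ) (r : ℕ) : pIn F w 0 r = 1 := by
  unfold pIn
  rw [Finset.filter_true_of_mem (fun γ _ => ⟨fun k => k.elim0, fun h => absurd h (by omega)⟩)]
  simp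

lemma pTot_succ (F : ℕ → Finset (ℕ × ℕ)) (w : ℕ → ℕ × ℕ → ℝ) (n : ℕ) :
    pTot F w (n+1) = ∑ e ∈ F 0, w 0 e * pOut (shf 1 F) (shf 1 w) n e.2 := by
  unfold pTot
  rw [sum_filter_piFinset_cons (fun k : Fin (n+1) => F k.val) (fun γ => Chain (n+1) γ)
    (fun k => w k.val)]
  refine Finset.sum_congr rfl fun e he => ?_
  rw [pOut, Finset.mul_sum]
  refine Finset.sum_congr ?_ fun δ _ => rfl
  ext δ
  simp only [Finset.mem_filter, Fintype.mem_piFinset, chain_cons, Fin.val_succ, shf]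

lemma pOut_succ (F : ℕ → Finset (ℕ × ℕ)) (w : ℕ → ℕ × ℕ → ℝ) (n r : ℕ) :
    pOut F w (n+1) r
      = ∑ e ∈ F 0, if e.1 = r then w 0 e * pOut (shf 1 F) (shf 1 w) n e.2 else 0 := by
  unfold pOut
  rw [sum_filter_piFinset_cons (fun k : Fin (n+1) => F k.val) (fun γ => ChainFrom (n+1) r γ)
    (fun k => w k.val)]
  refine Finset.sum_congr rfl fun e he => ?_
  by_cases h : e.1 = r
  · rw [if_pos h, Finset.mul_sum]
    refine Finset.sum_congr ?_ fun δ _ => rfl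
    ext δ
    simp only [Finset.mem_filter, Fintype.mem_piFinset, chainFrom_cons, Fin.val_succ, shf, h,
      true_and]
  · rw [if_neg h]
    refine Finset.sum_eq_zero fun δ hδ => ?_
    rw [Finset.mem_filter, chainFrom_cons] at hδ
    exact absurd hδ.2.1 h

lemma pIn_succ (F : ℕ → Finset (ℕ × ℕ)) (w : ℕ → ℕ × ℕ → ℝ) (n r : ℕ) :
    pIn F w (n+1) r
      = ∑ e ∈ F n, if e.2 = r then w n e * pIn F w n e.1 else 0 := by
  unfold pIn
  rw [sum_filter_piFinset_snoc (fun k : Fin (n+1) => F k.val) (fun γ => ChainTo (n+1) r γ)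
    (fun k => w k.val)]
  refine Finset.sum_congr rfl fun e he => ?_
  by_cases h : e.2 = r
  · rw [if_pos h, mul_comm (w n e), Finset.sum_mul]
    refine Finset.sum_congr ?_ fun δ _ => rfl
    ext δ
    simp only [Finset.mem_filter, Fintype.mem_piFinset, chainTo_snoc, Fin.coe_castSucc, h,
      true_and]
  · rw [if_neg h]
    refine Finset.sum_eq_zero fun δ hδ => ?_
    rw [Finset.mem_filter, chainTo_snoc] at hδ
    exact absurd hδ.2.1 h

lemma pTot_nonneg (F : ℕ → Finset (ℕ × ℕ)) (w : ℕ → ℕ × ℕ → ℝ)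
    (hw : ∀ j e, 0 ≤ w j e) (n : ℕ) : 0 ≤ pTot F w n :=
  Finset.sum_nonneg fun γ _ => Finset.prod_nonneg fun k _ => hw _ _

lemma pOut_nonneg (F : ℕ → Finset (ℕ × ℕ)) (w : ℕ → ℕ × ℕ → ℝ)
    (hw : ∀ j e, 0 ≤ w j e) (n r : ℕ) : 0 ≤ pOut F w n r :=
  Finset.sum_nonneg fun γ _ => Finset.prod_nonneg fun k _ => hw _ _

lemma pIn_nonneg (F : ℕ → Finset (ℕ × ℕ)) (w : ℕ → ℕ × ℕ → ℝ)
    (hw : ∀ j e, 0 ≤ w j e) (n r : ℕ) : 0 ≤ pIn F w n r :=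
  Finset.sum_nonneg fun γ _ => Finset.prod_nonneg fun k _ => hw _ _

lemma pOut_congr (F : ℕ → Finset (ℕ × ℕ)) (w w' : ℕ → ℕ × ℕ → ℝ) (n r : ℕ)
    (h : ∀ j, j < n → w j = w' j) : pOut F w n r = pOut F w' n r :=
  Finset.sum_congr rfl fun γ _ => Finset.prod_congr rfl fun k _ => by rw [h k.val k.isLt]

lemma pIn_congr (F : ℕ → Finset (ℕ × ℕ)) (w w' : ℕ → ℕ × ℕ → ℝ) (n r : ℕ)
    (h : ∀ j, j < n → w j = w' j) : pIn F w n r = pIn F w' n r :=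
  Finset.sum_congr rfl fun γ _ => Finset.prod_congr rfl fun k _ => by rw [h k.val k.isLt]

lemma pOut_succ_shf (F : ℕ → Finset (ℕ × ℕ)) (w : ℕ → ℕ × ℕ → ℝ) (l n r : ℕ) :
    pOut (shf l F) (shf l w) (n+1) r
      = ∑ e ∈ F l, if e.1 = r then w l e * pOut (shf (l+1) F) (shf (l+1) w) n e.2 else 0 := by
  rw [pOut_succ]
  have hc : 1 + l = l + 1 := Nat.add_comm 1 l
  have h1 : (shf l F) 0 = F l := by simp [shf]
  have h2 : shf 1 (shf l F) = shf (l+1) F := by rw [shf_shf, hc]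
  have h3 : shf 1 (shf l w) = shf (l+1) w := by rw [shf_shf, hc]
  rw [h1, h2, h3]
  refine Finset.sum_congr rfl fun e he => ?_
  have h4 : (shf l w) 0 e = w l e := by simp [shf]
  rw [h4]

lemma pTot_split (F : ℕ → Finset (ℕ × ℕ)) (w : ℕ → ℕ × ℕ → ℝ) :
    ∀ k n : ℕ, k < n →
      pTot F w n = ∑ e ∈ F k, w k e *
        (pIn F w k e.1 * pOut (shf (k+1) F) (shf (k+1) w) (n-k-1) e.2) := by
  intro k
  induction k with
  | zero =>
    intro n hn
    obtain ⟨m, rfl⟩ : ∃ m, n = m + 1 := ⟨n-1, by omega⟩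
    rw [pTot_succ]
    refine Finset.sum_congr rfl fun e he => ?_
    rw [pIn_zero, one_mul]
    norm_num
  | succ k ih =>
    intro n hn
    have hk : k < n := by omega
    have harr : n - k - 1 = (n - (k+1) - 1) + 1 := by omega
    calc pTot F w n
        = ∑ e ∈ F k, w k e *
            (pIn F w k e.1 * pOut (shf (k+1) F) (shf (k+1) w) (n-k-1) e.2) := ih n hk
      _ = ∑ e ∈ F k, ∑ x ∈ F (k+1), (if e.2 = x.1 then
            (w k e * pIn F w k e.1) *
              (w (k+1) x * pOut (shf (k+1+1) F) (shf (k+1+1) w) (n-(k+1)-1) x.2) else 0) := by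
          refine Finset.sum_congr rfl fun e he => ?_
          rw [harr, pOut_succ_shf]
          simp only [Finset.mul_sum]
          refine Finset.sum_congr rfl fun x hx => ?_
          by_cases hxe : x.1 = e.2
          · rw [if_pos hxe, if_pos hxe.symm]
            ring
          · rw [if_neg hxe, if_neg (fun h => hxe (Eq.symm h))]
            simp
      _ = ∑ x ∈ F (k+1), ∑ e ∈ F k, (if e.2 = x.1 then
            (w k e * pIn F w k e.1) *
              (w (k+1) x * pOut (shf (k+1+1) F) (shf (k+1+1) w) (n-(k+1)-1) x.2) else 0) :=
          Finset.sum_comm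
      _ = ∑ x ∈ F (k+1), w (k+1) x *
            (pIn F w (k+1) x.1 * pOut (shf (k+1+1) F) (shf (k+1+1) w) (n-(k+1)-1) x.2) := by
          refine Finset.sum_congr rfl fun x hx => ?_
          rw [pIn_succ, Finset.sum_mul, Finset.mul_sum]
          refine Finset.sum_congr rfl fun e he => ?_
          by_cases hxe : e.2 = x.1
          · rw [if_pos hxe, if_pos hxe]
            ring
          · rw [if_neg hxe, if_neg hxe]
            simp

set_option maxHeartbeats 1600000 in
theorem local_max_is_global
    (K : ℕ) (hK : 3 < K) (E : ℕ → Finset (ℕ × ℕ)) (θ : ℕ → ℕ → ℕ → ℝ)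
    (hθ0 : ∀ k i j, 0 ≤ θ k i j)
    (hsum : ∀ k, k < K - 1 → ∑ e ∈ E k, θ k e.1 e.2 = 1)
    (hE : ∀ k (hk : k < K - 1), ∃ e ∈ E k,
      ∃ γ : Fin (K-1) → ℕ × ℕ, (∀ k', γ k' ∈ E k'.val) ∧ Contig K γ ∧ γ ⟨k, hk⟩ = e)
    (hloc : ∃ ε > 0, ∀ θ' : ℕ → ℕ → ℕ → ℝ,
      (∀ k i j, 0 ≤ θ' k i j) →
      (∀ k, k < K - 1 → ∑ e ∈ E k, θ' k e.1 e.2 = 1) →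
      (∀ k, k < K - 1 → ∀ e ∈ E k, |θ' k e.1 e.2 - θ k e.1 e.2| < ε) →
      phiTot K E θ' ≤ phiTot K E θ) :
    phiTot K E θ = 1 := by
  obtain ⟨ε, hε, hloc⟩ := hloc
  have hite0 : ∀ (c : Prop) (inst : Decidable c) (a : ℝ), 0 ≤ a → 0 ≤ (if c then a else 0) := by
    intro c inst a ha
    split
    · exact ha
    · exact le_refl 0
  have hite0' : ∀ (c : Prop) (inst : Decidable c) (a : ℝ), 0 ≤ a → 0 ≤ (if c then 0 else a) := by
    intro c inst a ha
    split
    · exact le_refl 0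
    · exact ha
  set w : ℕ → ℕ × ℕ → ℝ := fun j e => θ j e.1 e.2 with hwdef
  set n : ℕ := K - 1 with hndef
  have hn3 : 3 ≤ n := by omega
  have hphi : phiTot K E θ = pTot E w n := rfl
  have hw0 : ∀ j e, 0 ≤ w j e := fun j e => hθ0 j e.1 e.2
  have hws : ∀ j, j < n → ∑ e ∈ E j, w j e = 1 := fun j hj => hsum j hj
  have hwle1 : ∀ j, j < n → ∀ e ∈ E j, w j e ≤ 1 := by
    intro j hj e he
    have h1 := Finset.single_le_sum (f := fun x => w j x) (fun x _ => hw0 j x) he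
    rw [hws j hj] at h1
    exact h1
  have hloc' : ∀ w' : ℕ → ℕ × ℕ → ℝ, (∀ j e, 0 ≤ w' j e) →
      (∀ j, j < n → ∑ e ∈ E j, w' j e = 1) →
      (∀ j, j < n → ∀ e ∈ E j, |w' j e - w j e| < ε) →
      pTot E w' n ≤ pTot E w n := by
    intro w' h1 h2 h3
    exact hloc (fun k i j => w' k (i, j)) (fun k i j => h1 k (i, j)) (fun k hk => h2 k hk)
      (fun k hk e he => h3 k hk e he)
  -- δ1 : a universal small step size
  set δ1 : ℝ := min 1 (ε/2) with hδ1def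
  have hδ1pos : 0 < δ1 := lt_min one_pos (by linarith)
  have hδ1le1 : δ1 ≤ 1 := min_le_left _ _
  have hδ1ε : δ1 < ε := lt_of_le_of_lt (min_le_right _ _) (by linarith)
  -- positivity of pTot
  have hpos : 0 < pTot E w n := by
    obtain ⟨e0, he0, γp, hγmem, hγchain, -⟩ := hE 0 (by omega)
    set v : ℕ → ℕ × ℕ → ℝ :=
      fun j x => if h : j < n then (if γp ⟨j, h⟩ = x then 1 else 0) else w j x with hvdef
    have hv0 : ∀ j x, 0 ≤ v j x := by
      intro j x
      simp only [hvdef]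
      by_cases h : j < n
      · rw [dif_pos h]; split <;> norm_num
      · rw [dif_neg h]; exact hw0 j x
    have hv1 : ∀ j, j < n → ∀ x, v j x ≤ 1 := by
      intro j hj x
      simp only [hvdef, dif_pos hj]
      split <;> norm_num
    set w1 : ℕ → ℕ × ℕ → ℝ := fun j x => (1 - δ1) * w j x + δ1 * v j x with hw1def
    have h1 : ∀ j x, 0 ≤ w1 j x := by
      intro j x
      simp only [hw1def]
      have := hw0 j x
      have := hv0 j x
      nlinarith
    have h2 : ∀ j, j < n → ∑ x ∈ E j, w1 j x = 1 := by
      intro j hj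
      simp only [hw1def]
      rw [Finset.sum_add_distrib, ← Finset.mul_sum, ← Finset.mul_sum, hws j hj]
      have hv : ∑ x ∈ E j, v j x = 1 := by
        simp only [hvdef, dif_pos hj]
        rw [Finset.sum_ite_eq (E j) (γp ⟨j, hj⟩) (fun _ => (1:ℝ))]
        rw [if_pos (hγmem ⟨j, hj⟩)]
      rw [hv]
      ring
    have h3 : ∀ j, j < n → ∀ x ∈ E j, |w1 j x - w j x| < ε := by
      intro j hj x hx
      have h0 := hw0 j x
      have hle := hwle1 j hj x hx
      have hv0' := hv0 j x
      have hv1' := hv1 j hj x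
      have heq : w1 j x - w j x = δ1 * (v j x - w j x) := by simp only [hw1def]; ring
      rw [heq, abs_mul, abs_of_pos hδ1pos]
      have habs : |v j x - w j x| ≤ 1 := by
        rw [abs_le]; constructor <;> linarith
      nlinarith
    have hle := hloc' w1 h1 h2 h3
    have hterm : δ1 ^ n ≤ pTot E w1 n := by
      have hmem : γp ∈ (Fintype.piFinset (fun k : Fin n => E k.val)).filter
          (fun γ => Chain n γ) := by
        rw [Finset.mem_filter, Fintype.mem_piFinset]
        exact ⟨fun k => hγmem k, hγchain⟩
      have hsingle := Finset.single_le_sum (f := fun γ : Fin n → ℕ × ℕ => ∏ k : Fin n, w1 k.val (γ k))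
        (fun γ _ => Finset.prod_nonneg fun k _ => h1 _ _) hmem
      have hprod : δ1 ^ n ≤ ∏ k : Fin n, w1 k.val (γp k) := by
        have hp : ∏ _k : Fin n, δ1 ≤ ∏ k : Fin n, w1 k.val (γp k) := by
          refine Finset.prod_le_prod (fun k _ => le_of_lt hδ1pos) (fun k _ => ?_)
          have hvk : v k.val (γp k) = 1 := by
            simp [hvdef, k.isLt]
          simp only [hw1def, hvk]
          nlinarith [hw0 k.val (γp k)]
        calc δ1 ^ n = ∏ _k : Fin n, δ1 := by
              rw [Finset.prod_const, Finset.card_univ, Fintype.card_fin]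
          _ ≤ _ := hp
      exact le_trans hprod hsingle
    have hd : 0 < δ1 ^ n := pow_pos hδ1pos n
    calc (0:ℝ) < δ1 ^ n := hd
      _ ≤ pTot E w1 n := hterm
      _ ≤ pTot E w n := hle
  -- upper bound
  have htotal : ∑ γ ∈ Fintype.piFinset (fun k : Fin n => E k.val), ∏ k : Fin n, w k.val (γ k)
      = 1 := by
    rw [← Finset.prod_univ_sum]
    exact Finset.prod_eq_one fun k _ => hws k.val k.isLt
  have hle1 : pTot E w n ≤ 1 := by
    have h1 : pTot E w n ≤ ∑ γ ∈ Fintype.piFinset (fun k : Fin n => E k.val),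
        ∏ k : Fin n, w k.val (γ k) :=
      Finset.sum_le_sum_of_subset_of_nonneg (Finset.filter_subset _ _)
        (fun γ _ _ => Finset.prod_nonneg fun k _ => hw0 _ _)
    rw [htotal] at h1
    exact h1
  -- splitting
  have hsplit : ∀ j, j < n → pTot E w n = ∑ x ∈ E j, w j x *
      (pIn E w j x.1 * pOut (shf (j+1) E) (shf (j+1) w) (n-j-1) x.2) :=
    fun j hj => pTot_split E w j n hj
  -- first order conditions
  have hFOC : ∀ j, j < n → ∀ x ∈ E j, ∀ y ∈ E j, 0 < w j x →
      pIn E w j y.1 * pOut (shf (j+1) E) (shf (j+1) w) (n-j-1) y.2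
        ≤ pIn E w j x.1 * pOut (shf (j+1) E) (shf (j+1) w) (n-j-1) x.2 := by
    intro j hj x hx y hy hwx
    by_cases hxy : y = x
    · rw [hxy]
    set C : ℕ × ℕ → ℝ := fun z =>
      pIn E w j z.1 * pOut (shf (j+1) E) (shf (j+1) w) (n-j-1) z.2 with hCdef
    show C y ≤ C x
    set δ2 : ℝ := min (w j x) (ε/2) with hδ2def
    have hδ2pos : 0 < δ2 := lt_min hwx (by linarith)
    have hδ2w : δ2 ≤ w j x := min_le_left _ _
    have hδ2ε : δ2 < ε := lt_of_le_of_lt (min_le_right _ _) (by linarith)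
    set w' : ℕ → ℕ × ℕ → ℝ := fun j' z => if j' = j then
        w j' z + (if z = y then δ2 else 0) - (if z = x then δ2 else 0)
      else w j' z with hw'def
    have hw'j : ∀ z, w' j z = w j z + (if z = y then δ2 else 0) - (if z = x then δ2 else 0) :=
      fun z => by simp only [hw'def, if_pos rfl]
    have hw'o : ∀ j', j' ≠ j → w' j' = w j' := fun j' h => by
      funext z; simp only [hw'def, if_neg h]
    have h1 : ∀ j' z, 0 ≤ w' j' z := by
      intro j' z
      by_cases h : j' = j
      · subst h
        rw [hw'j z]
        by_cases hzx : z = x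
        · have hzy : ¬ z = y := fun hh => hxy (hh.symm.trans hzx)
          rw [if_pos hzx, if_neg hzy]
          subst hzx
          linarith [hδ2w]
        · rw [if_neg hzx]
          have := hw0 j' z
          split <;> linarith [hδ2pos]
      · rw [hw'o j' h]; exact hw0 j' z
    have h2 : ∀ j', j' < n → ∑ z ∈ E j', w' j' z = 1 := by
      intro j' hj'
      by_cases h : j' = j
      · subst h
        rw [Finset.sum_congr rfl (fun z _ => hw'j z)]
        rw [Finset.sum_sub_distrib, Finset.sum_add_distrib, hws j' hj']
        rw [Finset.sum_ite_eq' (E j') y (fun _ => δ2), Finset.sum_ite_eq' (E j') x (fun _ => δ2)]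
        rw [if_pos hy, if_pos hx]
        ring
      · rw [Finset.sum_congr rfl (fun z _ => by rw [hw'o j' h])]
        exact hws j' hj'
    have h3 : ∀ j', j' < n → ∀ z ∈ E j', |w' j' z - w j' z| < ε := by
      intro j' hj' z hz
      by_cases h : j' = j
      · subst h
        rw [hw'j z]
        have harr : w j' z + (if z = y then δ2 else 0) - (if z = x then δ2 else 0) - w j' z
            = (if z = y then δ2 else 0) - (if z = x then δ2 else 0) := by ring
        rw [harr]
        by_cases hzy : z = y <;> by_cases hzx : z = x
        · rw [if_pos hzy, if_pos hzx]
          simpa using hε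
        · rw [if_pos hzy, if_neg hzx, sub_zero, abs_of_pos hδ2pos]
          exact hδ2ε
        · rw [if_neg hzy, if_pos hzx, zero_sub, abs_neg, abs_of_pos hδ2pos]
          exact hδ2ε
        · rw [if_neg hzy, if_neg hzx]
          simpa using hε
      · rw [hw'o j' h]
        simpa using hε
    have hval : pTot E w' n = pTot E w n + δ2 * C y - δ2 * C x := by
      rw [pTot_split E w' j n hj]
      have hCeq : ∀ z : ℕ × ℕ,
          pIn E w' j z.1 * pOut (shf (j+1) E) (shf (j+1) w') (n-j-1) z.2 = C z := by
        intro z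
        have hin : pIn E w' j z.1 = pIn E w j z.1 :=
          pIn_congr E w' w j z.1 (fun t ht => hw'o t (by omega))
        have hout : pOut (shf (j+1) E) (shf (j+1) w') (n-j-1) z.2
            = pOut (shf (j+1) E) (shf (j+1) w) (n-j-1) z.2 :=
          pOut_congr _ _ _ _ _ (fun t ht => by
            funext u
            simp only [shf]
            rw [hw'o (t + (j+1)) (by omega)])
        rw [hin, hout]
      calc ∑ z ∈ E j, w' j z *
            (pIn E w' j z.1 * pOut (shf (j+1) E) (shf (j+1) w') (n-j-1) z.2)
          = ∑ z ∈ E j, w' j z * C z :=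
            Finset.sum_congr rfl fun z _ => by rw [hCeq z]
        _ = ∑ z ∈ E j, (w j z * C z + (if z = y then δ2 * C z else 0)
              - (if z = x then δ2 * C z else 0)) := by
            refine Finset.sum_congr rfl fun z _ => ?_
            rw [hw'j z]
            have hyx : ¬ x = y := fun h => hxy h.symm
            by_cases hzy : z = y <;> by_cases hzx : z = x <;>
              simp [hzy, hzx, hxy, hyx] <;> ring
        _ = pTot E w n + δ2 * C y - δ2 * C x := by
            rw [Finset.sum_sub_distrib, Finset.sum_add_distrib]
            rw [Finset.sum_ite_eq' (E j) y (fun z => δ2 * C z),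
              Finset.sum_ite_eq' (E j) x (fun z => δ2 * C z)]
            rw [if_pos hy, if_pos hx, ← hsplit j hj]
    have hfin := hloc' w' h1 h2 h3
    rw [hval] at hfin
    have : δ2 * C y ≤ δ2 * C x := by linarith
    exact (mul_le_mul_iff_right₀ hδ2pos).mp this
  -- supported edges achieve the value
  have hCsup : ∀ j, j < n → ∀ x ∈ E j, 0 < w j x →
      pIn E w j x.1 * pOut (shf (j+1) E) (shf (j+1) w) (n-j-1) x.2 = pTot E w n := by
    intro j hj x hx hwx
    have h1 : ∀ z ∈ E j, w j z *
        (pIn E w j z.1 * pOut (shf (j+1) E) (shf (j+1) w) (n-j-1) z.2)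
        = w j z * (pIn E w j x.1 * pOut (shf (j+1) E) (shf (j+1) w) (n-j-1) x.2) := by
      intro z hz
      rcases eq_or_lt_of_le (hw0 j z) with h0 | h0
      · rw [← h0, zero_mul, zero_mul]
      · have ha := hFOC j hj x hx z hz hwx
        have hb := hFOC j hj z hz x hx h0
        rw [le_antisymm ha hb]
    have h2 : pTot E w n = (∑ z ∈ E j, w j z) *
        (pIn E w j x.1 * pOut (shf (j+1) E) (shf (j+1) w) (n-j-1) x.2) := by
      rw [hsplit j hj, Finset.sum_congr rfl h1, ← Finset.sum_mul]
    rw [h2, hws j hj, one_mul]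
  -- suppose not 1
  by_contra hne
  have hlt : pTot E w n < 1 := lt_of_le_of_ne hle1 (fun h => hne (by rw [hphi, h]))
  -- bad tuple
  obtain ⟨γb, hγb, hppos⟩ : ∃ γ ∈ (Fintype.piFinset (fun k : Fin n => E k.val)) \
      ((Fintype.piFinset (fun k : Fin n => E k.val)).filter (fun γ => Chain n γ)),
      0 < ∏ k : Fin n, w k.val (γ k) := by
    have hsd := Finset.sum_sdiff (f := fun γ : Fin n → ℕ × ℕ => ∏ k : Fin n, w k.val (γ k))
      (Finset.filter_subset (fun γ => Chain n γ) (Fintype.piFinset (fun k : Fin n => E k.val)))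
    have hpos' : 0 < ∑ γ ∈ (Fintype.piFinset (fun k : Fin n => E k.val)) \
        ((Fintype.piFinset (fun k : Fin n => E k.val)).filter (fun γ => Chain n γ)),
        ∏ k : Fin n, w k.val (γ k) := by
      have : pTot E w n = ∑ γ ∈ (Fintype.piFinset (fun k : Fin n => E k.val)).filter
          (fun γ => Chain n γ), ∏ k : Fin n, w k.val (γ k) := rfl
      rw [htotal, ← this] at hsd
      linarith
    obtain ⟨γ, hγ, hγ2⟩ := Finset.exists_lt_of_sum_lt
      (s := (Fintype.piFinset (fun k : Fin n => E k.val)) \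
        ((Fintype.piFinset (fun k : Fin n => E k.val)).filter (fun γ => Chain n γ)))
      (f := fun _ : Fin n → ℕ × ℕ => (0:ℝ))
      (g := fun γ : Fin n → ℕ × ℕ => ∏ k : Fin n, w k.val (γ k)) (by simpa using hpos')
    exact ⟨γ, hγ, hγ2⟩
  rw [Finset.mem_sdiff] at hγb
  obtain ⟨hγbp, hγbf⟩ := hγb
  have hnc : ¬ Chain n γb := fun hc => hγbf (Finset.mem_filter.mpr ⟨hγbp, hc⟩)
  have hγbmem : ∀ k : Fin n, γb k ∈ E k.val := Fintype.mem_piFinset.mp hγbp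
  have hwpos : ∀ i : Fin n, 0 < w i.val (γb i) := by
    intro i
    rcases eq_or_lt_of_le (hw0 i.val (γb i)) with h0 | h0
    · exfalso
      have hz : ∏ k : Fin n, w k.val (γb k) = 0 :=
        Finset.prod_eq_zero (Finset.mem_univ i) h0.symm
      rw [hz] at hppos
      exact lt_irrefl 0 hppos
    · exact h0
  obtain ⟨kf, hk1, hne2⟩ : ∃ k : Fin n, ∃ h : k.val + 1 < n,
      (γb k).2 ≠ (γb ⟨k.val+1, h⟩).1 := by
    by_contra hcc
    push_neg at hcc
    exact hnc (fun k h => hcc k h)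
  set k : ℕ := kf.val with hkdef
  set e : ℕ × ℕ := γb kf with hedef
  set f : ℕ × ℕ := γb ⟨k+1, hk1⟩ with hfdef
  set φ : ℝ := pTot E w n with hφdef
  set A : ℕ → ℝ := fun r => pIn E w k r with hAdef
  set A1 : ℕ → ℝ := fun r => pIn E w (k+1) r with hA1def
  set B1 : ℕ → ℝ := fun r => pOut (shf (k+1) E) (shf (k+1) w) (n-k-1) r with hB1def
  set B2 : ℕ → ℝ := fun r => pOut (shf (k+1+1) E) (shf (k+1+1) w) (n-(k+1)-1) r with hB2def
  have hkn : k < n := by omega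
  have hk1n : k + 1 < n := hk1
  have hee : e ∈ E k := hγbmem kf
  have hfe : f ∈ E (k+1) := hγbmem ⟨k+1, hk1⟩
  have hwe : 0 < w k e := hwpos kf
  have hwf : 0 < w (k+1) f := hwpos ⟨k+1, hk1⟩
  have hφpos : 0 < φ := hpos
  have hφlt : φ < 1 := hlt
  have hCe : A e.1 * B1 e.2 = φ := hCsup k hkn e hee hwe
  have hCf : A1 f.1 * B2 f.2 = φ := hCsup (k+1) hk1n f hfe hwf
  have hA0 : ∀ r, 0 ≤ A r := fun r => pIn_nonneg E w hw0 k r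
  have hA10 : ∀ r, 0 ≤ A1 r := fun r => pIn_nonneg E w hw0 (k+1) r
  have hB10 : ∀ r, 0 ≤ B1 r := fun r =>
    pOut_nonneg (shf (k+1) E) (shf (k+1) w) (fun j x => hw0 _ _) (n-k-1) r
  have hB20 : ∀ r, 0 ≤ B2 r := fun r =>
    pOut_nonneg (shf (k+1+1) E) (shf (k+1+1) w) (fun j x => hw0 _ _) (n-(k+1)-1) r
  have hAe1 : 0 < A e.1 := by
    by_contra h
    push_neg at h
    have h0 : A e.1 = 0 := le_antisymm h (hA0 _)
    rw [h0, zero_mul] at hCe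
    linarith
  have hB1e2 : 0 < B1 e.2 := by
    by_contra h
    push_neg at h
    have h0 : B1 e.2 = 0 := le_antisymm h (hB10 _)
    rw [h0, mul_zero] at hCe
    linarith
  -- recursions
  have hA1rec : ∀ r, A1 r = ∑ x ∈ E k, (if x.2 = r then w k x * A x.1 else 0) :=
    fun r => pIn_succ E w k r
  have hB1rec : ∀ r, B1 r = ∑ x ∈ E (k+1), (if x.1 = r then w (k+1) x * B2 x.2 else 0) := by
    intro r
    show pOut (shf (k+1) E) (shf (k+1) w) (n-k-1) r = _
    rw [show n - k - 1 = (n - (k+1) - 1) + 1 from by omega, pOut_succ_shf]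
  have hA1e2 : 0 < A1 e.2 := by
    have h1 : w k e * A e.1 ≤ A1 e.2 := by
      rw [hA1rec e.2]
      have hs := Finset.single_le_sum
        (f := fun x : ℕ × ℕ => if x.2 = e.2 then w k x * A x.1 else 0)
        (fun x _ => hite0 _ _ _ (mul_nonneg (hw0 _ _) (hA0 _))) hee
      simpa using hs
    nlinarith
  -- key inequality
  have hsplit1 : φ = ∑ x ∈ E (k+1), w (k+1) x * (A1 x.1 * B2 x.2) := hsplit (k+1) hk1n
  have hnef : ¬ f.1 = e.2 := fun h => hne2 h.symm
  have hkey : A1 e.2 * B1 e.2 + w (k+1) f * φ ≤ φ := by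
    have hdecomp : ∀ x : ℕ × ℕ, w (k+1) x * (A1 x.1 * B2 x.2)
        = (if x.1 = e.2 then A1 e.2 * (w (k+1) x * B2 x.2) else 0)
          + (if x.1 = e.2 then 0 else w (k+1) x * (A1 x.1 * B2 x.2)) := by
      intro x
      by_cases hx1 : x.1 = e.2
      · rw [if_pos hx1, if_pos hx1, add_zero, ← hx1]
        ring
      · rw [if_neg hx1, if_neg hx1, zero_add]
    have h1 : φ = A1 e.2 * B1 e.2 + ∑ x ∈ E (k+1),
        (if x.1 = e.2 then 0 else w (k+1) x * (A1 x.1 * B2 x.2)) := by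
      rw [hsplit1, Finset.sum_congr rfl (fun x _ => hdecomp x), Finset.sum_add_distrib]
      congr 1
      rw [hB1rec e.2, Finset.mul_sum]
      refine Finset.sum_congr rfl fun x _ => ?_
      by_cases hx1 : x.1 = e.2 <;> simp [hx1]
    have h2 : w (k+1) f * (A1 f.1 * B2 f.2) ≤ ∑ x ∈ E (k+1),
        (if x.1 = e.2 then 0 else w (k+1) x * (A1 x.1 * B2 x.2)) := by
      have hs := Finset.single_le_sum
        (f := fun x : ℕ × ℕ => if x.1 = e.2 then 0 else w (k+1) x * (A1 x.1 * B2 x.2))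
        (fun x _ => hite0' _ _ _ (mul_nonneg (hw0 _ _) (mul_nonneg (hA10 _) (hB20 _)))) hfe
      simpa [hnef] using hs
    rw [hCf] at h2
    linarith
  have hA1B1pos : 0 < A1 e.2 * B1 e.2 := mul_pos hA1e2 hB1e2
  -- find g
  obtain ⟨g, hge, hg1, hwg, hB2g⟩ : ∃ g ∈ E (k+1), g.1 = e.2 ∧ 0 < w (k+1) g ∧ 0 < B2 g.2 := by
    by_contra hno
    push_neg at hno
    have hzero : B1 e.2 ≤ 0 := by
      rw [hB1rec e.2]
      refine Finset.sum_nonpos fun x hx => ?_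
      by_cases hx1 : x.1 = e.2
      · rw [if_pos hx1]
        rcases eq_or_lt_of_le (hw0 (k+1) x) with h0 | h0
        · rw [← h0, zero_mul]
        · have hb2 := hno x hx hx1 h0
          nlinarith [hB20 x.2]
      · rw [if_neg hx1]
    linarith
  have hCg : A1 g.1 * B2 g.2 = φ := hCsup (k+1) hk1n g hge hwg
  have hCg' : A1 e.2 * B2 g.2 = φ := by rw [← hg1]; exact hCg
  -- the gain
  have hG : φ < A e.1 * B2 g.2 := by
    have hprod : (A e.1 * B2 g.2) * (A1 e.2 * B1 e.2) = φ * φ := by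
      calc (A e.1 * B2 g.2) * (A1 e.2 * B1 e.2)
          = (A e.1 * B1 e.2) * (A1 e.2 * B2 g.2) := by ring
        _ = φ * φ := by rw [hCe, hCg']
    have hlt2 : A1 e.2 * B1 e.2 < φ := by
      have := mul_pos hwf hφpos
      linarith
    by_contra hGle
    push_neg at hGle
    have ha : (A e.1 * B2 g.2) * (A1 e.2 * B1 e.2) ≤ φ * (A1 e.2 * B1 e.2) :=
      mul_le_mul_of_nonneg_right hGle (le_of_lt hA1B1pos)
    have hb : φ * (A1 e.2 * B1 e.2) < φ * φ := by
      exact mul_lt_mul_of_pos_left hlt2 hφpos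
    rw [hprod] at ha
    linarith
  -- final perturbation
  set w2 : ℕ → ℕ × ℕ → ℝ := fun j z =>
    if j = k then (1-δ1) * w j z + δ1 * (if z = e then 1 else 0)
    else if j = k+1 then (1-δ1) * w j z + δ1 * (if z = g then 1 else 0)
    else w j z with hw2def
  have hw2k : ∀ z, w2 k z = (1-δ1) * w k z + δ1 * (if z = e then 1 else 0) := by
    intro z
    simp [hw2def]
  have hw2k1 : ∀ z, w2 (k+1) z = (1-δ1) * w (k+1) z + δ1 * (if z = g then 1 else 0) := by
    intro z
    simp [hw2def, show ¬ k+1 = k by omega]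
  have hw2o : ∀ j, j ≠ k → j ≠ k+1 → w2 j = w j := fun j ha hb => by
    funext z
    simp only [hw2def, if_neg ha, if_neg hb]
  have h1 : ∀ j z, 0 ≤ w2 j z := by
    intro j z
    have hind : ∀ c : Prop, ∀ inst : Decidable c, 0 ≤ (if c then (1:ℝ) else 0) :=
      fun c inst => by split <;> norm_num
    by_cases ha : j = k
    · subst ha
      rw [hw2k z]
      have := hw0 k z
      have := hind (z = e) inferInstance
      nlinarith
    · by_cases hb : j = k+1
      · subst hb
        rw [hw2k1 z]
        have := hw0 (k+1) z
        have := hind (z = g) inferInstance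
        nlinarith
      · rw [hw2o j ha hb]
        exact hw0 j z
  have h2 : ∀ j, j < n → ∑ z ∈ E j, w2 j z = 1 := by
    intro j hj
    by_cases ha : j = k
    · subst ha
      rw [Finset.sum_congr rfl (fun z _ => hw2k z), Finset.sum_add_distrib,
        ← Finset.mul_sum, ← Finset.mul_sum, hws k hj,
        Finset.sum_ite_eq' (E k) e (fun _ => (1:ℝ)), if_pos hee]
      ring
    · by_cases hb : j = k+1
      · subst hb
        rw [Finset.sum_congr rfl (fun z _ => hw2k1 z), Finset.sum_add_distrib,
          ← Finset.mul_sum, ← Finset.mul_sum, hws (k+1) hj,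
          Finset.sum_ite_eq' (E (k+1)) g (fun _ => (1:ℝ)), if_pos hge]
        ring
      · rw [Finset.sum_congr rfl (fun z _ => by rw [hw2o j ha hb])]
        exact hws j hj
  have h3 : ∀ j, j < n → ∀ z ∈ E j, |w2 j z - w j z| < ε := by
    have key : ∀ j, j < n → ∀ z ∈ E j, ∀ u : ℕ × ℕ,
        |((1-δ1) * w j z + δ1 * (if z = u then 1 else 0)) - w j z| < ε := by
      intro j hj z hz u
      have h0 := hw0 j z
      have hle := hwle1 j hj z hz
      have heq : ((1-δ1) * w j z + δ1 * (if z = u then 1 else 0)) - w j z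
          = δ1 * ((if z = u then 1 else 0) - w j z) := by ring
      rw [heq, abs_mul, abs_of_pos hδ1pos]
      have habs : |(if z = u then (1:ℝ) else 0) - w j z| ≤ 1 := by
        rw [abs_le]
        split <;> constructor <;> linarith
      nlinarith
    intro j hj z hz
    by_cases ha : j = k
    · subst ha
      rw [hw2k z]
      exact key k hj z hz e
    · by_cases hb : j = k+1
      · subst hb
        rw [hw2k1 z]
        exact key (k+1) hj z hz g
      · rw [hw2o j ha hb]
        simpa using hε
  -- value of the perturbed configuration
  have hin2 : ∀ r, pIn E w2 k r = A r := fun r =>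
    pIn_congr E w2 w k r (fun t ht => hw2o t (by omega) (by omega))
  have hB2' : ∀ r, pOut (shf (k+1+1) E) (shf (k+1+1) w2) (n-(k+1)-1) r = B2 r := fun r =>
    pOut_congr _ _ _ _ _ (fun t ht => by
      funext u
      simp only [shf]
      rw [hw2o (t + (k+1+1)) (by omega) (by omega)])
  have hB1' : ∀ r, pOut (shf (k+1) E) (shf (k+1) w2) (n-k-1) r
      = (1-δ1) * B1 r + δ1 * (if g.1 = r then B2 g.2 else 0) := by
    intro r
    rw [show n - k - 1 = (n - (k+1) - 1) + 1 from by omega, pOut_succ_shf]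
    have hterm : ∀ x ∈ E (k+1),
        (if x.1 = r then w2 (k+1) x * pOut (shf (k+1+1) E) (shf (k+1+1) w2) (n-(k+1)-1) x.2 else 0)
        = (1-δ1) * (if x.1 = r then w (k+1) x * B2 x.2 else 0)
          + δ1 * (if x = g then (if g.1 = r then B2 g.2 else 0) else 0) := by
      intro x hx
      rw [hB2' x.2, hw2k1 x]
      by_cases hxg : x = g
      · by_cases hgr : g.1 = r <;> simp [hxg, hgr] <;> ring
      · by_cases hx1 : x.1 = r <;> simp [hxg, hx1] <;> ring
    rw [Finset.sum_congr rfl hterm, Finset.sum_add_distrib, ← Finset.mul_sum, ← Finset.mul_sum]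
    rw [← hB1rec r, Finset.sum_ite_eq' (E (k+1)) g
      (fun _ => if g.1 = r then B2 g.2 else 0), if_pos hge]
  have hval : pTot E w2 n = (1-δ1)*(1-δ1)*φ + (1-δ1)*δ1*φ + δ1*(1-δ1)*φ
      + δ1*δ1*(A e.1 * B2 g.2) := by
    rw [pTot_split E w2 k n hkn]
    have hterm : ∀ x ∈ E k, w2 k x *
        (pIn E w2 k x.1 * pOut (shf (k+1) E) (shf (k+1) w2) (n-k-1) x.2)
        = (1-δ1)*(1-δ1) * (w k x * (A x.1 * B1 x.2))
          + (1-δ1)*δ1 * ((if x.2 = g.1 then w k x * A x.1 else 0) * B2 g.2)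
          + δ1*(1-δ1) * (if x = e then A x.1 * B1 x.2 else 0)
          + δ1*δ1 * (if x = e then (if g.1 = x.2 then A x.1 * B2 g.2 else 0) else 0) := by
      intro x hx
      rw [hin2 x.1, hB1' x.2, hw2k x]
      by_cases hxe : x = e
      · simp [hxe, hg1] <;> ring
      · by_cases hx2 : x.2 = g.1
        · simp [hxe, hx2] <;> ring
        · have hng : ¬ g.1 = x.2 := fun hh => hx2 hh.symm
          simp [hxe, hx2, hng] <;> ring
    rw [Finset.sum_congr rfl hterm]
    rw [Finset.sum_add_distrib, Finset.sum_add_distrib, Finset.sum_add_distrib]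
    rw [← Finset.mul_sum, ← Finset.mul_sum, ← Finset.mul_sum, ← Finset.mul_sum]
    have hs1 : ∑ x ∈ E k, w k x * (A x.1 * B1 x.2) = φ := (hsplit k hkn).symm
    have hs2 : ∑ x ∈ E k, (if x.2 = g.1 then w k x * A x.1 else 0) * B2 g.2
        = φ := by
      rw [← Finset.sum_mul, ← hA1rec g.1]
      exact hCg
    have hs3 : ∑ x ∈ E k, (if x = e then A x.1 * B1 x.2 else 0) = A e.1 * B1 e.2 := by
      rw [Finset.sum_ite_eq' (E k) e (fun x => A x.1 * B1 x.2), if_pos hee]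
    have hs4 : ∑ x ∈ E k, (if x = e then (if g.1 = x.2 then A x.1 * B2 g.2 else 0) else 0)
        = A e.1 * B2 g.2 := by
      rw [Finset.sum_ite_eq' (E k) e (fun x => if g.1 = x.2 then A x.1 * B2 g.2 else 0),
        if_pos hee, if_pos hg1]
    rw [hs1, hs2, hs3, hs4, hCe]
  have hfin := hloc' w2 h1 h2 h3
  rw [hval] at hfin
  have hsq : 0 < δ1 * δ1 := mul_pos hδ1pos hδ1pos
  nlinarith [hfin, hsq, hG]
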